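/- For m > max{|ρ|^{4/3}, 10} with (log m)/√m < √(2/|ρ|), the quantity λ₀² defined by λ₀^{-2} = 2∫₀^{(log m)/√m}(1+(ρ/2)r²)^{-2m/ρ-2} r dr satisfies λ₀² = (m + ρ/2)(1 + O(e^{-(log m)²})); i.e., there is a constant C with |λ₀²/(m + ρ/2) - 1| ≤ C e^{-(log m)²}. -/

import Mathlib

open intervalIntegral

lemma exp233 : Real.exp 2.33 < 11 := by
  have e1 : Real.exp 1 < 2.7182818286 := Real.exp_one_lt_d9
  have hpos : (0:ℝ) < Real.exp 0.165 := Real.exp_pos _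
  have h1pos : (0:ℝ) < Real.exp 1 := Real.exp_pos _
  have e2 : Real.exp (0.165:ℝ) ≤ 1/0.835 := by
    have h1 : (-0.165:ℝ) + 1 ≤ Real.exp (-0.165) := Real.add_one_le_exp _
    have h2 : Real.exp (-0.165:ℝ) * Real.exp (0.165:ℝ) = 1 := by
      rw [← Real.exp_add]; norm_num
    rw [le_div_iff₀ (by norm_num)]
    nlinarith
  have heq : Real.exp (2.33:ℝ) = Real.exp 1 * Real.exp 1 * Real.exp 0.165 * Real.exp 0.165 := by
    rw [← Real.exp_add, ← Real.exp_add, ← Real.exp_add]; norm_num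
  have ha : Real.exp 1 * Real.exp 1 < 7.3890562 := by nlinarith
  have hb : Real.exp 0.165 * Real.exp 0.165 ≤ (1/0.835)*(1/0.835) := by nlinarith
  rw [heq]
  calc Real.exp 1 * Real.exp 1 * Real.exp 0.165 * Real.exp 0.165
      = (Real.exp 1 * Real.exp 1) * (Real.exp 0.165 * Real.exp 0.165) := by ring
    _ < 11 := by nlinarith [mul_pos h1pos h1pos, mul_pos hpos hpos]

lemma log11' : (2.33:ℝ) < Real.log 11 := by
  rw [← Real.exp_lt_exp, Real.exp_log (by norm_num : (0:ℝ) < 11)]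
  exact exp233

lemma expq4_cube {q : ℝ} (hq : 0 ≤ q) : (1 + q/12)^3 ≤ Real.exp (q/4) := by
  have h1 : 1 + q/12 ≤ Real.exp (q/12) := by
    have := Real.add_one_le_exp (q/12); linarith
  have h2 : (1 + q/12)^3 ≤ Real.exp (q/12)^3 := by
    apply pow_le_pow_left₀ (by positivity) h1
  have h3 : Real.exp (q/12)^3 = Real.exp (q/4) := by
    rw [← Real.exp_nat_mul]; norm_num; ring_nf
  linarith [h2, h3.le, h3.ge]

lemma expq4_pow5 {q : ℝ} (hq : 0 ≤ q) : (q/20)^5 ≤ Real.exp (q/4) := by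
  have h1 : 1 + q/20 ≤ Real.exp (q/20) := by
    have := Real.add_one_le_exp (q/20); linarith
  have h2 : (q/20)^5 ≤ (1+q/20)^5 := by
    apply pow_le_pow_left₀ (by positivity); linarith
  have h3 : (1+q/20)^5 ≤ Real.exp (q/20)^5 := pow_le_pow_left₀ (by positivity) h1 5
  have h4 : Real.exp (q/20)^5 = Real.exp (q/4) := by
    rw [← Real.exp_nat_mul]; norm_num; ring_nf
  linarith

lemma P1 {q : ℝ} (hq : 2.33 ≤ q) : 2 + q^2 * Real.exp (-(q/4)) ≤ q^2 := by
  have hq0 : (0:ℝ) ≤ q := by linarith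
  have hc := expq4_cube hq0
  have hcpos : (0:ℝ) < (1 + q/12)^3 := by positivity
  have hinv : Real.exp (-(q/4)) ≤ ((1 + q/12)^3)⁻¹ := by
    rw [Real.exp_neg]
    exact inv_anti₀ hcpos hc
  have hb : q^2 * Real.exp (-(q/4)) ≤ q^2 * ((1 + q/12)^3)⁻¹ :=
    mul_le_mul_of_nonneg_left hinv (by positivity)
  have key : q^2 * ((1 + q/12)^3)⁻¹ ≤ q^2 - 2 := by
    rw [mul_inv_le_iff₀ hcpos]
    nlinarith [sq_nonneg q, sq_nonneg (q - 2.33), pow_pos (show (0:ℝ) < 1 + q/12 by linarith) 3]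
  linarith

lemma P2 {q : ℝ} (hq : 2.33 ≤ q) : q^4 * Real.exp (-(q/4)) ≤ 2*10^6 := by
  have hq0 : (0:ℝ) ≤ q := by linarith
  have hc := expq4_pow5 hq0
  have hepos : (0:ℝ) < Real.exp (q/4) := Real.exp_pos _
  have h5 : (0:ℝ) < q^5 := by positivity
  rw [Real.exp_neg, mul_inv_le_iff₀ hepos]
  calc q^4 ≤ (2*10^6) * (q/20)^5 := by nlinarith
    _ ≤ 2*10^6 * Real.exp (q/4) := by nlinarith


set_option maxHeartbeats 1000000 in
/-- For m > max{|ρ|^{4/3}, 10} with (log m)/√m < √(2/|ρ|), the quantity λ₀² defined by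
λ₀^{-2} = 2∫₀^{(log m)/√m}(1+(ρ/2)r²)^{-2m/ρ-2} r dr satisfies
λ₀² = (m + ρ/2)(1 + O(e^{-(log m)²})). -/
theorem stmt7 (ρ : ℝ) (hρ : ρ ≠ 0) :
    ∃ C > (0 : ℝ), ∀ m : ℕ,
      max (|ρ| ^ ((4 : ℝ) / 3)) 10 < (m : ℝ) →
      Real.log m / Real.sqrt m < Real.sqrt (2 / |ρ|) →
      ∀ lamsq : ℝ,
        lamsq = (2 * ∫ r in (0 : ℝ)..(Real.log m / Real.sqrt m),
            (1 + ρ / 2 * r ^ 2) ^ (-(2 * (m : ℝ) / ρ) - 2) * r)⁻¹ →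
        |lamsq / ((m : ℝ) + ρ / 2) - 1| ≤ C * Real.exp (-(Real.log m) ^ 2) := by
  refine ⟨2 * Real.exp (10^6), by positivity, ?_⟩
  intro m hm hT lamsq hlam
  have hρ' : 0 < |ρ| := abs_pos.mpr hρ
  have hm10 : (10:ℝ) < m := lt_of_le_of_lt (le_max_right _ _) hm
  have hmpos : (0:ℝ) < m := by linarith
  have hm11 : (11:ℝ) ≤ m := by
    have h1 : (10:ℕ) < m := by exact_mod_cast hm10
    have h2 : (11:ℕ) ≤ m := h1
    exact_mod_cast h2
  set q := Real.log (m:ℝ) with hqdef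
  have hq : (2.33:ℝ) ≤ q :=
    le_of_lt (lt_of_lt_of_le log11' (Real.log_le_log (by norm_num) hm11))
  have hq0 : (0:ℝ) < q := by linarith
  have hmq : (m:ℝ) = Real.exp q := (Real.exp_log hmpos).symm
  -- |ρ| < exp(3q/4) < m
  have hρm : |ρ| < Real.exp (3*q/4) := by
    have h1 : |ρ| ^ ((4:ℝ)/3) < (m:ℝ) := lt_of_le_of_lt (le_max_left _ _) hm
    rw [Real.rpow_def_of_pos hρ', hmq, Real.exp_lt_exp] at h1
    calc |ρ| = Real.exp (Real.log |ρ|) := (Real.exp_log hρ').symm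
      _ < Real.exp (3*q/4) := by rw [Real.exp_lt_exp]; nlinarith
  have hρltm : |ρ| < (m:ℝ) := by
    refine lt_of_lt_of_le hρm ?_
    rw [hmq, Real.exp_le_exp]; linarith
  set E := Real.exp (-(q/4)) with hEdef
  have hE0 : 0 < E := Real.exp_pos _
  have hρmE : |ρ| < E * m := by
    rw [hmq, hEdef, ← Real.exp_add]
    convert hρm using 2
    ring
  set T := q / Real.sqrt (m:ℝ) with hTdef
  have hsq : (0:ℝ) < Real.sqrt m := Real.sqrt_pos.mpr hmpos
  have hT0 : 0 < T := div_pos hq0 hsq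
  have hT2 : T^2 = q^2 / m := by rw [hTdef, div_pow, Real.sq_sqrt hmpos.le]
  have hT2lt : T^2 < 2/|ρ| := by
    have := (Real.lt_sqrt hT0.le).mp hT
    exact this
  have habs : |ρ| * T^2 < 2 := by
    rw [lt_div_iff₀ hρ'] at hT2lt; linarith [hT2lt]
  set x := ρ/2 * T^2 with hxdef
  have hxe : x = ρ * q^2 / (2*m) := by rw [hxdef, hT2]; ring
  have hρabs : -|ρ| ≤ ρ := neg_abs_le ρ
  have hx1 : 0 < 1 + x := by
    have h := mul_nonneg (by linarith : (0:ℝ) ≤ ρ + |ρ|) (sq_nonneg T)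
    rw [hxdef]; nlinarith
  -- positivity of the base on the interval
  have hbase : ∀ r ∈ Set.uIcc (0:ℝ) T, 0 < 1 + ρ/2*r^2 := by
    intro r hr
    rw [Set.uIcc_of_le hT0.le] at hr
    obtain ⟨hr0, hrT⟩ := hr
    have hrr : r^2 ≤ T^2 := pow_le_pow_left₀ hr0 hrT 2
    have h1 := mul_nonneg (by linarith : (0:ℝ) ≤ ρ + |ρ|) (sq_nonneg r)
    have h2 := mul_nonneg (abs_nonneg ρ) (sub_nonneg.mpr hrr)
    nlinarith
  set c := -(2 * (m:ℝ) / ρ) - 2 with hcdef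
  have h2mρ : 0 < 2*(m:ℝ) + ρ := by linarith
  have hM : 0 < (m:ℝ) + ρ/2 := by linarith
  have hc1 : ρ * (c+1) = -(2*(m:ℝ)+ρ) := by
    rw [hcdef]; field_simp; ring
  -- the antiderivative
  have hderiv : ∀ r ∈ Set.uIcc (0:ℝ) T,
      HasDerivAt (fun s : ℝ => (1 + ρ/2*s^2)^(c+1) / (-(2*(m:ℝ)+ρ)))
        ((1 + ρ/2*r^2)^c * r) r := by
    intro r hr
    have hb := hbase r hr
    have h1 : HasDerivAt (fun s : ℝ => 1 + ρ/2*s^2) (ρ*r) r := by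
      have h := ((hasDerivAt_pow 2 r).const_mul (ρ/2)).const_add (1:ℝ)
      refine h.congr_deriv ?_
      simp; ring
    have h2 : HasDerivAt (fun y : ℝ => y ^ (c+1)) ((c+1) * (1+ρ/2*r^2)^(c+1-1)) (1+ρ/2*r^2) :=
      Real.hasDerivAt_rpow_const (Or.inl hb.ne')
    have h3 := (h2.comp r h1).div_const (-(2*(m:ℝ)+ρ))
    refine h3.congr_deriv ?_
    rw [show c+1-1 = c by ring, div_eq_iff (by intro h0; rw [neg_eq_zero] at h0; linarith : -(2*(m:ℝ)+ρ) ≠ 0)]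
    have hρc : -(2*(m:ℝ)+ρ) = ρ*(c+1) := by linarith
    rw [hρc]; ring
  have hcont : ContinuousOn (fun r : ℝ => (1 + ρ/2*r^2)^c * r) (Set.uIcc (0:ℝ) T) := by
    apply ContinuousOn.mul _ continuousOn_id
    apply ContinuousOn.rpow_const
    · exact (continuous_const.add (continuous_const.mul (continuous_pow 2))).continuousOn
    · exact fun r hr => Or.inl (hbase r hr).ne'
  have hint : IntervalIntegrable (fun r : ℝ => (1 + ρ/2*r^2)^c * r)
      MeasureTheory.volume 0 T := hcont.intervalIntegrable
  set u := (1+x)^(c+1) with hudef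
  have hInt : (∫ r in (0:ℝ)..T, (1 + ρ/2*r^2)^c * r) = (1 - u) / (2*m+ρ) := by
    rw [intervalIntegral.integral_eq_sub_of_hasDerivAt hderiv hint]
    have h0 : 1 + ρ/2*(0:ℝ)^2 = 1 := by norm_num
    rw [h0, Real.one_rpow, ← hxdef, ← hudef, div_sub_div_same, div_neg, ← neg_div, neg_sub]
  have hu0 : 0 < u := Real.rpow_pos_of_pos hx1 _
  have hu_exp : u = Real.exp (Real.log (1+x) * (c+1)) := by
    rw [hudef, Real.rpow_def_of_pos hx1]
  -- exponent estimates
  set L := Real.log (1+x) with hLdef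
  have hP1 := P1 hq
  have hP2 := P2 hq
  have hq2m : (0:ℝ) < q^2/(2*m) := by positivity
  have hExp : L * (c+1) ≤ -2 ∧ L * (c+1) ≤ 10^6 - q^2 := by
    clear hu_exp hu0 hudef hlam hInt hint hcont hderiv hbase hm hT
    clear_value u L x c T E q
    rw [← hEdef] at hP1 hP2
    have h1q2 : (1:ℝ) ≤ q^2 := by nlinarith
    have hq4 : q^2 ≤ q^4 := by nlinarith [mul_le_mul_of_nonneg_left h1q2 (sq_nonneg q)]
    have hq2E : 0 ≤ q^2 * E := by positivity
    rcases hρ.lt_or_gt with hneg | hpos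
    · -- ρ < 0
      have hxneg : x < 0 := by
        rw [hxe]
        exact div_neg_of_neg_of_pos (mul_neg_of_neg_of_pos hneg (by positivity)) (by positivity)
      have hL : L ≤ x := by
        have h := Real.log_le_sub_one_of_pos hx1
        rw [hLdef]; linarith
      have hcpos : (0:ℝ) ≤ c + 1 := by
        by_contra h
        push_neg at h
        nlinarith [mul_pos (neg_pos.mpr hneg) (neg_pos.mpr h)]
      have h1 : L * (c+1) ≤ x * (c+1) := mul_le_mul_of_nonneg_right hL hcpos
      have h2 : x * (c+1) = -q^2 - x := by
        rw [hxe, hcdef]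
        field_simp
        ring
      have h3 : -x ≤ q^2 * E / 2 := by
        rw [hxe, ← neg_div, ← neg_mul]
        have hρE : -ρ ≤ E * ↑m := by linarith [neg_le_abs ρ]
        have hn1 : -ρ * q^2 ≤ E * ↑m * q^2 :=
          mul_le_mul_of_nonneg_right hρE (sq_nonneg q)
        have hn2 : E * ↑m * q^2 / (2*↑m) = q^2 * E / 2 := by
          field_simp
        rw [← hn2]
        exact div_le_div_of_nonneg_right hn1 (by positivity)
      constructor
      · nlinarith [hP1]
      · nlinarith [hP2, hE0.le, mul_nonneg (show (0:ℝ) ≤ q^4 - q^2 by linarith) hE0.le]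
    · -- 0 < ρ
      have hxpos : 0 < x := by rw [hxe]; positivity
      have hLpos : 0 < L := by rw [hLdef]; exact Real.log_pos (by linarith)
      have hL1 : x/(1+x) ≤ L := by
        have h := Real.one_sub_inv_le_log_of_pos hx1
        have h2 : 1 - (1+x)⁻¹ = x/(1+x) := by field_simp; ring
        rw [hLdef]; linarith
      have hL2 : x - x^2 ≤ L := by
        have h : x - x^2 ≤ x/(1+x) := by
          rw [le_div_iff₀ hx1]; nlinarith
        linarith
      have hB : c + 1 = -(2*↑m/ρ) - 1 := by rw [hcdef]; ring
      have hBpos : (0:ℝ) < 2*↑m/ρ := div_pos (by linarith) hpos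
      have hBx : (2*↑m/ρ) * x = q^2 := by
        rw [hxe]; field_simp
      have hxE : x ≤ q^2 * E / 2 := by
        rw [hxe]
        have hρE : ρ ≤ E * ↑m := by linarith [le_abs_self ρ]
        have hn1 : ρ * q^2 ≤ E * ↑m * q^2 :=
          mul_le_mul_of_nonneg_right hρE (sq_nonneg q)
        have hn2 : E * ↑m * q^2 / (2*↑m) = q^2 * E / 2 := by
          field_simp
        rw [← hn2]
        exact div_le_div_of_nonneg_right hn1 (by positivity)
      have s1 : x/(1+x) * (2*↑m/ρ) ≤ L * (2*↑m/ρ) :=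
        mul_le_mul_of_nonneg_right hL1 hBpos.le
      have s2 : x/(1+x) * (2*↑m/ρ) = q^2/(1+x) := by
        rw [div_mul_eq_mul_div, mul_comm x, hBx]
      have s3 : (x - x^2) * (2*↑m/ρ) ≤ L * (2*↑m/ρ) :=
        mul_le_mul_of_nonneg_right hL2 hBpos.le
      have s4 : (x - x^2) * (2*↑m/ρ) = q^2 - x*q^2 := by
        rw [sub_mul, mul_comm x, hBx, show x^2*(2*↑m/ρ) = x*((2*↑m/ρ)*x) by ring, hBx]
      have hce : L * (c+1) = -(L * (2*↑m/ρ)) - L := by rw [hB]; ring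
      constructor
      · have hdiv : 2 ≤ q^2/(1+x) := by
          rw [le_div_iff₀ hx1]; linarith [hxE, hP1]
        rw [hce]
        linarith [s1, s2.symm.le, s2.le, hLpos]
      · have hxq : x * q^2 ≤ q^4 * E / 2 := by
          have t1 := mul_le_mul_of_nonneg_right hxE (sq_nonneg q)
          have t2 : q^2 * E / 2 * q^2 = q^4 * E / 2 := by ring
          linarith
        rw [hce]
        linarith [s3, s4, hLpos, hP2, hxq]
  have hu2 : u ≤ Real.exp (-2) := by
    rw [hu_exp]; exact Real.exp_le_exp.mpr hExp.1
  have huK : u ≤ Real.exp (10^6 - q^2) := by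
    rw [hu_exp]; exact Real.exp_le_exp.mpr hExp.2
  have hu_half : u ≤ 1/2 := by
    refine hu2.trans ?_
    rw [Real.exp_neg]
    rw [inv_le_comm₀ (Real.exp_pos 2) (by norm_num)]
    have := Real.add_one_le_exp (2:ℝ); linarith
  have h1u : (0:ℝ) < 1 - u := by linarith
  -- lamsq = (m+ρ/2)/(1-u)
  have hlam2 : lamsq = ((m:ℝ)+ρ/2) / (1-u) := by
    rw [hlam, hInt]
    rw [show (2:ℝ) * ((1-u)/(2*m+ρ)) = (1-u)/(m+ρ/2) by
      rw [mul_div_assoc', div_eq_div_iff (by linarith) (by linarith)]; ring]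
    rw [inv_div]
  have hratio : lamsq / ((m:ℝ)+ρ/2) - 1 = u / (1-u) := by
    rw [hlam2, div_right_comm, div_self hM.ne']
    rw [eq_div_iff h1u.ne', sub_mul, one_div, inv_mul_cancel₀ h1u.ne']
    ring
  clear_value L u x T c E q
  clear hbase hderiv hcont hint hlam hInt hm hT hu_exp hudef
  rw [hratio, abs_of_nonneg (div_nonneg hu0.le h1u.le)]
  have hfin1 : u / (1-u) ≤ 2*u := by
    rw [div_le_iff₀ h1u]; nlinarith
  have hfin2 : 2*u ≤ 2 * Real.exp (10^6) * Real.exp (-q^2) := by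
    have : Real.exp (10^6 - q^2) = Real.exp (10^6) * Real.exp (-q^2) := by
      rw [← Real.exp_add]; ring_nf
    linarith [huK, this]
  exact le_trans hfin1 hfin2
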